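/- Let P be a compact convex set in the Euclidean plane ℝ² with nonempty interior, and let q ∉ P. Among all triangles with vertex q that circumscribe P, the triangle △qbc such that the midpoint of the side [b,c] lies in P is the unique one of minimum area: if △qb'c' circumscribes P and the midpoint of [b',c'] does not lie in P, then the area (two-dimensional Lebesgue measure of the convex hull) of △qbc is strictly smaller than that of △qb'c'. -/

import Mathlib

open EuclideanGeometry Real Set MeasureTheory

set_option maxHeartbeats 1000000

local notation "V2" => EuclideanSpace ℝ (Fin 2)

lemma tri_coords {E : Type*} [AddCommGroup E] [Module ℝ E] {q b c p : E}
    (h : p ∈ convexHull ℝ ({q, b, c} : Set E)) :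
    ∃ s t : ℝ, 0 ≤ s ∧ 0 ≤ t ∧ s + t ≤ 1 ∧ p - q = s • (b - q) + t • (c - q) := by
  rw [show ({q, b, c} : Set E) = insert q {b, c} from rfl,
    convexHull_insert ⟨b, mem_insert _ _⟩, convexHull_pair, mem_convexJoin] at h
  obtain ⟨x, hx, z, hz, hp⟩ := h
  rw [mem_singleton_iff] at hx; subst hx
  obtain ⟨u1, u2, hu1, hu2, husum, hz⟩ := hz
  obtain ⟨v1, v2, hv1, hv2, hvsum, hp⟩ := hp
  refine ⟨v2 * u1, v2 * u2, by positivity, by positivity, by nlinarith, ?_⟩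
  have h1 : v1 = 1 - v2 := by linarith
  have h2 : u1 = 1 - u2 := by linarith
  rw [← hp, ← hz, h1, h2]
  module

lemma coords_unique {E : Type*} [AddCommGroup E] [Module ℝ E] {w1 w2 : E}
    (h : LinearIndependent ℝ ![w1, w2]) {s t s' t' : ℝ}
    (heq : s • w1 + t • w2 = s' • w1 + t' • w2) : s = s' ∧ t = t' := by
  have h0 : (s - s') • w1 + (t - t') • w2 = 0 := by
    calc (s - s') • w1 + (t - t') • w2 = (s • w1 + t • w2) - (s' • w1 + t' • w2) := by module
    _ = 0 := sub_eq_zero_of_eq heq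
  have h2 := Fintype.linearIndependent_iff.mp h ![s - s', t - t'] ?_
  · have ha := h2 0; have hb := h2 1
    simp only [Matrix.cons_val_zero, Matrix.cons_val_one, Matrix.head_cons] at ha hb
    constructor <;> linarith
  · simpa [Fin.sum_univ_two] using h0

lemma linIndep_swap {E : Type*} [AddCommGroup E] [Module ℝ E] {x y : E}
    (h : LinearIndependent ℝ ![x, y]) : LinearIndependent ℝ ![y, x] := by
  rw [Fintype.linearIndependent_iff] at h ⊢
  intro g hg i
  have := h ![g 1, g 0] (by
    simp only [Fin.sum_univ_two, Matrix.cons_val_zero, Matrix.cons_val_one, Matrix.head_cons] at hg ⊢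
    rw [add_comm]; exact hg)
  fin_cases i
  · exact this 1
  · exact this 0

lemma linIndep_of_interior {q b c : V2}
    (h : (interior (convexHull ℝ ({q, b, c} : Set V2))).Nonempty) :
    LinearIndependent ℝ ![b - q, c - q] := by
  have hspan : affineSpan ℝ ({q, b, c} : Set V2) = ⊤ :=
    affineSpan_eq_top_of_nonempty_interior h
  have hvs : vectorSpan ℝ ({q, b, c} : Set V2) = ⊤ :=
    AffineSubspace.vectorSpan_eq_top_of_affineSpan_eq_top ℝ _ _ hspan
  have himg : (· -ᵥ q) '' ({q, b, c} : Set V2) = {0, b - q, c - q} := by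
    simp [Set.image_insert_eq, vsub_eq_sub, sub_self]
  have hsp : Submodule.span ℝ (Set.range ![b - q, c - q]) = ⊤ := by
    have hr : Set.range ![b - q, c - q] = {b - q, c - q} := by
      ext v; simp [Fin.exists_fin_two, or_comm]
    rw [hr]
    have := vectorSpan_eq_span_vsub_set_right ℝ (show q ∈ ({q, b, c} : Set V2) from mem_insert _ _)
    rw [hvs, himg] at this
    rw [← Submodule.span_insert_zero]
    exact this.symm
  apply linearIndependent_of_top_le_span_of_card_eq_finrank hsp.ge
  simp [finrank_euclideanSpace_fin]

lemma touch {q r : V2} {P : Set V2} (hq : q ∉ P) (h : (segment ℝ q r ∩ P).Nonempty) :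
    ∃ α : ℝ, 0 < α ∧ q + α • (r - q) ∈ P := by
  obtain ⟨x, hxseg, hxP⟩ := h
  rw [segment_eq_image'] at hxseg
  obtain ⟨α, hα, rfl⟩ := hxseg
  refine ⟨α, ?_, hxP⟩
  rcases eq_or_lt_of_le hα.1 with h0 | h0
  · exfalso; apply hq; simpa [← h0] using hxP
  · exact h0

lemma ray_rep {q b c r : V2} {α : ℝ} (hα : 0 < α)
    (hmem : q + α • (r - q) ∈ convexHull ℝ ({q, b, c} : Set V2)) :
    ∃ p1 p2 : ℝ, 0 ≤ p1 ∧ 0 ≤ p2 ∧ r - q = p1 • (b - q) + p2 • (c - q) := by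
  obtain ⟨s, t, hs, ht, _, heq⟩ := tri_coords hmem
  rw [add_sub_cancel_left] at heq
  refine ⟨α⁻¹ * s, α⁻¹ * t, by positivity, by positivity, ?_⟩
  calc r - q = α⁻¹ • (α • (r - q)) := by rw [smul_smul, inv_mul_cancel₀ hα.ne', one_smul]
  _ = α⁻¹ • (s • (b - q) + t • (c - q)) := by rw [heq]
  _ = (α⁻¹ * s) • (b - q) + (α⁻¹ * t) • (c - q) := by rw [smul_add, smul_smul, smul_smul]

lemma vol_lt (q b c b' c' : V2) (hli' : LinearIndependent ℝ ![b' - q, c' - q])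
    (a d : ℝ) (ha : 0 < a) (hd : 0 < d) (had : a * d < 1)
    (hb : b - q = a • (b' - q)) (hc : c - q = d • (c' - q))
    (hpos : 0 < volume (convexHull ℝ ({q, b', c'} : Set V2))) :
    volume (convexHull ℝ ({q, b, c} : Set V2)) < volume (convexHull ℝ ({q, b', c'} : Set V2)) := by
  have hcard : Fintype.card (Fin 2) = Module.finrank ℝ (EuclideanSpace ℝ (Fin 2)) := by
    simp [finrank_euclideanSpace_fin]
  set B : Module.Basis (Fin 2) ℝ V2 := basisOfLinearIndependentOfCardEqFinrank hli' hcard with hB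
  have hBcoe : ⇑B = ![b' - q, c' - q] := coe_basisOfLinearIndependentOfCardEqFinrank hli' hcard
  have hB0 : B 0 = b' - q := by rw [hBcoe]; rfl
  have hB1 : B 1 = c' - q := by rw [hBcoe]; rfl
  set L : V2 →ₗ[ℝ] V2 := B.constr ℝ ![a • (b' - q), d • (c' - q)] with hL
  have hL0 : L (b' - q) = a • (b' - q) := by
    have h := B.constr_basis ℝ ![a • (b' - q), d • (c' - q)] 0
    rw [hB0] at h
    exact h
  have hL1 : L (c' - q) = d • (c' - q) := by
    have h := B.constr_basis ℝ ![a • (b' - q), d • (c' - q)] 1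
    rw [hB1] at h
    exact h
  have hdet : LinearMap.det L = a * d := by
    rw [← LinearMap.det_toMatrix B, Matrix.det_fin_two]
    have e00 : LinearMap.toMatrix B B L 0 0 = a := by
      rw [LinearMap.toMatrix_apply, hB0, hL0, ← hB0, _root_.map_smul, Module.Basis.repr_self]
      simp
    have e01 : LinearMap.toMatrix B B L 0 1 = 0 := by
      rw [LinearMap.toMatrix_apply, hB1, hL1, ← hB1, _root_.map_smul, Module.Basis.repr_self]
      simp [Finsupp.single_apply]
    have e10 : LinearMap.toMatrix B B L 1 0 = 0 := by
      rw [LinearMap.toMatrix_apply, hB0, hL0, ← hB0, _root_.map_smul, Module.Basis.repr_self]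
      simp [Finsupp.single_apply]
    have e11 : LinearMap.toMatrix B B L 1 1 = d := by
      rw [LinearMap.toMatrix_apply, hB1, hL1, ← hB1, _root_.map_smul, Module.Basis.repr_self]
      simp
    rw [e00, e01, e10, e11]; ring
  -- the affine map
  set F : V2 →ᵃ[ℝ] V2 := ⟨fun x => q + L (x - q), L, by
    intro p v
    simp only [vadd_eq_add]
    rw [show v + p - q = v + (p - q) by abel, map_add]
    abel⟩ with hF
  have hFapp : ∀ x, F x = q + L (x - q) := fun _ => rfl
  have hFq : F q = q := by rw [hFapp]; simp
  have hFb : F b' = b := by rw [hFapp, hL0, ← hb]; abel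
  have hFc : F c' = c := by rw [hFapp, hL1, ← hc]; abel
  have himg : F '' ({q, b', c'} : Set V2) = {q, b, c} := by
    rw [Set.image_insert_eq, Set.image_insert_eq, Set.image_singleton, hFq, hFb, hFc]
  have hvol : ∀ t : Set V2, volume (F '' t) = ENNReal.ofReal (a * d) * volume t := by
    intro t
    have h1 : F '' t = (fun y => q + y) '' (L '' ((fun x => x - q) '' t)) := by
      rw [Set.image_image, Set.image_image]; rfl
    have h2 := congrFun (Set.image_eq_preimage_of_inverse
      (f := fun y : V2 => q + y) (g := fun y : V2 => -q + y)
      (fun x => by simp) (fun x => by simp)) (L '' ((fun x : V2 => x - q) '' t))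
    have h3 := congrFun (Set.image_eq_preimage_of_inverse
      (f := fun x : V2 => x - q) (g := fun x : V2 => x + q)
      (fun x => by simp) (fun x => by simp)) t
    rw [h1, h2, measure_preimage_add, Measure.addHaar_image_linearMap, hdet, h3,
      measure_preimage_add_right, abs_of_pos (by positivity)]
  have hTT : convexHull ℝ ({q, b, c} : Set V2) = F '' convexHull ℝ ({q, b', c'} : Set V2) := by
    rw [AffineMap.image_convexHull, himg]
  have hfin : volume (convexHull ℝ ({q, b', c'} : Set V2)) ≠ ⊤ :=
    ((Set.toFinite _).isCompact_convexHull ℝ).measure_lt_top.ne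
  rw [hTT, hvol]
  calc ENNReal.ofReal (a * d) * volume (convexHull ℝ ({q, b', c'} : Set V2))
      < 1 * volume (convexHull ℝ ({q, b', c'} : Set V2)) := by
        refine ENNReal.mul_lt_mul_left hpos.ne' hfin ?_
        exact_mod_cast ENNReal.ofReal_lt_one.mpr had
  _ = _ := one_mul _

lemma aux_main (P : Set V2) (q b c b' c' : V2)
    (hsub' : P ⊆ convexHull ℝ ({q, b', c'} : Set V2))
    (hli' : LinearIndependent ℝ ![b' - q, c' - q])
    (a d : ℝ) (ha : 0 < a) (hd : 0 < d)
    (hb : b - q = a • (b' - q)) (hc : c - q = d • (c' - q))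
    (hmid : midpoint ℝ b c ∈ P) (hmid' : midpoint ℝ b' c' ∉ P)
    (hpos : 0 < volume (convexHull ℝ ({q, b', c'} : Set V2))) :
    volume (convexHull ℝ ({q, b, c} : Set V2)) < volume (convexHull ℝ ({q, b', c'} : Set V2)) := by
  obtain ⟨s, t, hs, ht, hst, hmeq⟩ := tri_coords (hsub' hmid)
  have hmrep : midpoint ℝ b c - q = (2⁻¹ * a) • (b' - q) + (2⁻¹ * d) • (c' - q) := by
    have h0 : midpoint ℝ b c - q = (2⁻¹ : ℝ) • (b - q) + (2⁻¹ : ℝ) • (c - q) := by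
      rw [midpoint_eq_smul_add, invOf_eq_inv]
      module
    rw [h0, hb, hc, smul_smul, smul_smul]
  rw [hmrep] at hmeq
  obtain ⟨hseq, hteq⟩ := coords_unique hli' hmeq.symm
  have hne : ¬ (a = 1 ∧ d = 1) := by
    rintro ⟨rfl, rfl⟩
    rw [one_smul] at hb hc
    have e1 : b = b' := by
      have := sub_left_inj.mp hb; exact this
    have e2 : c = c' := by
      have := sub_left_inj.mp hc; exact this
    rw [← e1, ← e2] at hmid'
    exact hmid' hmid
  have had : a * d < 1 := by
    by_contra hcon
    push_neg at hcon
    have h1 : a = d := by nlinarith [sq_nonneg (a - d)]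
    have h2 : a = 1 := by nlinarith
    exact hne ⟨h2, by rw [← h1, h2]⟩
  exact vol_lt q b c b' c' hli' a d ha hd had hb hc hpos

/-- A triangle with vertices `q`, `b`, `c` circumscribes `P`: `P` is contained in the
convex hull of the vertices and each of the three closed sides meets `P`. -/
def Circumscribes (q b c : EuclideanSpace ℝ (Fin 2)) (P : Set (EuclideanSpace ℝ (Fin 2))) : Prop :=
  P ⊆ convexHull ℝ {q, b, c} ∧
  (segment ℝ q b ∩ P).Nonempty ∧
  (segment ℝ q c ∩ P).Nonempty ∧
  (segment ℝ b c ∩ P).Nonempty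

theorem midpoint_triangle_is_unique_minimum_area
    (P : Set (EuclideanSpace ℝ (Fin 2)))
    (hPc : IsCompact P) (hPconv : Convex ℝ P) (hPint : (interior P).Nonempty)
    (q : EuclideanSpace ℝ (Fin 2)) (hq : q ∉ P)
    (b c : EuclideanSpace ℝ (Fin 2))
    (hbc : Circumscribes q b c P) (hmid : midpoint ℝ b c ∈ P)
    (b' c' : EuclideanSpace ℝ (Fin 2))
    (hbc' : Circumscribes q b' c' P) (hmid' : midpoint ℝ b' c' ∉ P) :
    volume (convexHull ℝ ({q, b, c} : Set (EuclideanSpace ℝ (Fin 2)))) <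
      volume (convexHull ℝ ({q, b', c'} : Set (EuclideanSpace ℝ (Fin 2)))) := by
  obtain ⟨hsubT, hsegb, hsegc, -⟩ := hbc
  obtain ⟨hsubT', hsegb', hsegc', -⟩ := hbc'
  have hint : (interior (convexHull ℝ ({q, b, c} : Set V2))).Nonempty :=
    hPint.mono (interior_mono hsubT)
  have hint' : (interior (convexHull ℝ ({q, b', c'} : Set V2))).Nonempty :=
    hPint.mono (interior_mono hsubT')
  have hli := linIndep_of_interior hint
  have hli' := linIndep_of_interior hint'
  have hpos : 0 < volume (convexHull ℝ ({q, b', c'} : Set V2)) := by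
    have h1 : 0 < volume (interior P) := isOpen_interior.measure_pos volume hPint
    exact h1.trans_le (measure_mono (interior_subset.trans hsubT'))
  obtain ⟨α, hα, hxP⟩ := touch hq hsegb
  obtain ⟨γ, hγ, hyP⟩ := touch hq hsegc
  obtain ⟨α', hα', hxP'⟩ := touch hq hsegb'
  obtain ⟨γ', hγ', hyP'⟩ := touch hq hsegc'
  obtain ⟨p1, p2, hp1, hp2, hu1⟩ := ray_rep hα' (hsubT hxP')
  obtain ⟨r1, r2, hr1, hr2, hu2⟩ := ray_rep hγ' (hsubT hyP')
  obtain ⟨l1, l2, hl1, hl2, hw1⟩ := ray_rep hα (hsubT' hxP)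
  obtain ⟨m1, m2, hm1, hm2, hw2⟩ := ray_rep hγ (hsubT' hyP)
  have hw1' : (1:ℝ) • (b - q) + (0:ℝ) • (c - q)
      = (l1*p1 + l2*r1) • (b - q) + (l1*p2 + l2*r2) • (c - q) := by
    have e := hw1
    rw [hu1, hu2] at e
    calc (1:ℝ) • (b - q) + (0:ℝ) • (c - q) = b - q := by module
    _ = l1 • (p1 • (b - q) + p2 • (c - q)) + l2 • (r1 • (b - q) + r2 • (c - q)) := e
    _ = (l1*p1 + l2*r1) • (b - q) + (l1*p2 + l2*r2) • (c - q) := by module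
  obtain ⟨hA, hB0⟩ := coords_unique hli hw1'
  have hw2' : (0:ℝ) • (b - q) + (1:ℝ) • (c - q)
      = (m1*p1 + m2*r1) • (b - q) + (m1*p2 + m2*r2) • (c - q) := by
    have e := hw2
    rw [hu1, hu2] at e
    calc (0:ℝ) • (b - q) + (1:ℝ) • (c - q) = c - q := by module
    _ = m1 • (p1 • (b - q) + p2 • (c - q)) + m2 • (r1 • (b - q) + r2 • (c - q)) := e
    _ = (m1*p1 + m2*r1) • (b - q) + (m1*p2 + m2*r2) • (c - q) := by module
  obtain ⟨hC, hD⟩ := coords_unique hli hw2'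
  have hl1p2 : l1 * p2 = 0 := by linarith [mul_nonneg hl1 hp2, mul_nonneg hl2 hr2]
  have hl2r2 : l2 * r2 = 0 := by linarith [mul_nonneg hl1 hp2, mul_nonneg hl2 hr2]
  have hm1p1 : m1 * p1 = 0 := by linarith [mul_nonneg hm1 hp1, mul_nonneg hm2 hr1]
  have hm2r1 : m2 * r1 = 0 := by linarith [mul_nonneg hm1 hp1, mul_nonneg hm2 hr1]
  have hcases : 0 < l1 * p1 ∨ 0 < l2 * r1 := by
    by_contra h
    push_neg at h
    obtain ⟨h1, h2⟩ := h
    nlinarith [mul_nonneg hl1 hp1, mul_nonneg hl2 hr1]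
  rcases hcases with hcase | hcase
  · -- b' along ray of b, c' along ray of c
    have hp1pos : 0 < p1 := by nlinarith
    have hl1pos : 0 < l1 := by nlinarith
    have hm1z : m1 = 0 := (mul_eq_zero.mp hm1p1).resolve_right hp1pos.ne'
    have hm2r2 : 1 = m2 * r2 := by rw [hD, hm1z]; ring
    have hr2pos : 0 < r2 := by nlinarith
    have hm2pos : 0 < m2 := by nlinarith
    have hl2z : l2 = 0 := (mul_eq_zero.mp hl2r2).resolve_right hr2pos.ne'
    have hp2z : p2 = 0 := (mul_eq_zero.mp hl1p2).resolve_left hl1pos.ne'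
    have hr1z : r1 = 0 := (mul_eq_zero.mp hm2r1).resolve_left hm2pos.ne'
    have hbq : b - q = p1⁻¹ • (b' - q) := by
      rw [hu1, hp2z, zero_smul, add_zero, smul_smul, inv_mul_cancel₀ hp1pos.ne', one_smul]
    have hcq : c - q = r2⁻¹ • (c' - q) := by
      rw [hu2, hr1z, zero_smul, zero_add, smul_smul, inv_mul_cancel₀ hr2pos.ne', one_smul]
    exact aux_main P q b c b' c' hsubT' hli' p1⁻¹ r2⁻¹ (by positivity) (by positivity)
      hbq hcq hmid hmid' hpos
  · -- b' along ray of c, c' along ray of b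
    have hr1pos : 0 < r1 := by nlinarith
    have hl2pos : 0 < l2 := by nlinarith
    have hm2z : m2 = 0 := (mul_eq_zero.mp hm2r1).resolve_right hr1pos.ne'
    have hm1p2 : 1 = m1 * p2 := by rw [hD, hm2z]; ring
    have hp2pos : 0 < p2 := by nlinarith
    have hm1pos : 0 < m1 := by nlinarith
    have hl1z : l1 = 0 := (mul_eq_zero.mp hl1p2).resolve_right hp2pos.ne'
    have hp1z : p1 = 0 := (mul_eq_zero.mp hm1p1).resolve_left hm1pos.ne'
    have hr2z : r2 = 0 := (mul_eq_zero.mp hl2r2).resolve_left hl2pos.ne'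
    have hbq : b - q = r1⁻¹ • (c' - q) := by
      rw [hu2, hr2z, zero_smul, add_zero, smul_smul, inv_mul_cancel₀ hr1pos.ne', one_smul]
    have hcq : c - q = p2⁻¹ • (b' - q) := by
      rw [hu1, hp1z, zero_smul, zero_add, smul_smul, inv_mul_cancel₀ hp2pos.ne', one_smul]
    rw [show ({q, b', c'} : Set V2) = {q, c', b'} by rw [Set.pair_comm b' c']]
    exact aux_main P q b c c' b'
      (by rw [Set.pair_comm c' b']; exact hsubT') (linIndep_swap hli')
      r1⁻¹ p2⁻¹ (by positivity) (by positivity) hbq hcq hmid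
      (by rw [midpoint_comm]; exact hmid')
      (by rw [Set.pair_comm c' b']; exact hpos)
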